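/- Let Φ ∈ L⁴(ℝ²) have the Fourier decomposition in the angular variable Φ(r,θ) = Σ_{n∈ℤ} φ_n(r) e^{inθ}. Then ∫_{ℝ²} |Φ|⁴ dx ≥ 2π Σ_{p,q∈ℤ} ∫_0^∞ |φ_p(r)|² |φ_q(r)|² r dr. -/

import Mathlib

open MeasureTheory Real
open scoped ENNReal

lemma my_tsum_lintegral_le {α : Type*} [MeasurableSpace α] (μ : Measure α) {ι : Type*}
    (f : ι → α → ℝ≥0∞) : ∑' i, ∫⁻ a, f i a ∂μ ≤ ∫⁻ a, ∑' i, f i a ∂μ := by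
  rw [ENNReal.tsum_eq_iSup_sum]
  refine iSup_le fun s => ?_
  have h1 : ∑ i ∈ s, ∫⁻ a, f i a ∂μ ≤ ∫⁻ a, ∑ i ∈ s, f i a ∂μ := by
    classical
    induction s using Finset.induction with
    | empty => simp
    | insert _ _ h ih =>
        rw [Finset.sum_insert h]
        simp_rw [Finset.sum_insert h]
        exact le_trans (add_le_add_right ih _) (le_lintegral_add _ _)
  exact h1.trans (lintegral_mono fun a => ENNReal.sum_le_tsum s)

lemma my_key (g : ℝ → ℂ) (hg2 : IntegrableOn g (Set.Ioc 0 (2*π)))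
    (hg4 : IntegrableOn (fun θ => ‖g θ‖^4) (Set.Ioc 0 (2*π))) (c : ℤ → ℂ)
    (hc : ∀ n : ℤ, c n = (∫ θ in (0:ℝ)..(2*π),
        g θ * Complex.exp (-Complex.I * (n:ℂ) * (θ:ℂ))) / (2*(π:ℂ))) :
    Summable (fun n : ℤ => ‖c n‖^2) ∧
    (∑' n : ℤ, ‖c n‖^2)^2 ≤ (1/(2*π)) * ∫ θ in (0:ℝ)..(2*π), ‖g θ‖^4 := by
  haveI hT : Fact (0 < 2*π) := ⟨by positivity⟩
  have h2π : (0:ℝ) < 2*π := hT.out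
  set μ := volume.restrict (Set.Ioc (0:ℝ) (2*π)) with hμ
  have m : AEStronglyMeasurable g μ := hg2.aestronglyMeasurable
  set g' : ℝ → ℂ := m.mk g with hg'def
  have hsm : StronglyMeasurable g' := m.stronglyMeasurable_mk
  have hae : g =ᵐ[μ] g' := m.ae_eq_mk
  -- integrability of ‖g‖^2
  have hgsq : Integrable (fun θ => ‖g θ‖^2) μ := by
    have hbig : Integrable (fun θ => 1 + ‖g θ‖^4) μ := (integrable_const 1).add hg4
    refine hbig.mono' ((continuous_pow 2).comp_aestronglyMeasurable m.norm)
      (Filter.Eventually.of_forall fun θ => ?_)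
    have : |‖g θ‖^2| = ‖g θ‖^2 := abs_of_nonneg (by positivity)
    rw [Real.norm_eq_abs, this]
    nlinarith [sq_nonneg (‖g θ‖^2 - 1), sq_nonneg (‖g θ‖)]
  have hgsq' : Integrable (fun θ => ‖g' θ‖^2) μ :=
    hgsq.congr (hae.fun_comp (fun z => ‖z‖^2))
  -- lift to the circle
  set F : AddCircle (2*π) → ℂ := AddCircle.liftIoc (2*π) 0 g' with hF
  have hFsm : StronglyMeasurable F := by
    have : F = g' ∘ ((Subtype.val : Set.Ioc (0:ℝ) (0+2*π) → ℝ) ∘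
        (AddCircle.measurableEquivIoc (2*π) 0)) := rfl
    rw [this]
    exact hsm.comp_measurable
      (measurable_subtype_coe.comp (AddCircle.measurableEquivIoc (2*π) 0).measurable)
  have hFg' : ∀ x ∈ Set.Ioc (0:ℝ) (0+2*π), F x = g' x := fun x hx =>
    AddCircle.liftIoc_coe_apply hx
  -- integrability of ‖F‖^2 on circle volume
  have hμ' : volume.restrict (Set.Ioc (0:ℝ) (0+2*π)) = μ := by rw [zero_add]
  have hFsq : Integrable (fun t => ‖F t‖^2) (volume : Measure (AddCircle (2*π))) := by
    rw [← (AddCircle.measurePreserving_mk (2*π) 0).integrable_comp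
      (((continuous_pow 2).comp_aestronglyMeasurable hFsm.aestronglyMeasurable.norm))]
    rw [hμ']
    refine hgsq'.congr ?_
    rw [← hμ']
    filter_upwards [ae_restrict_mem measurableSet_Ioc] with x hx
    simp only [Function.comp_apply]
    rw [hFg' x hx]
  have hFsqh : Integrable (fun t => ‖F t‖^2) (AddCircle.haarAddCircle (T := 2*π)) := by
    have h1 : (AddCircle.haarAddCircle (T := 2*π)) =
        (ENNReal.ofReal (2*π))⁻¹ • (volume : Measure (AddCircle (2*π))) := by
      rw [AddCircle.volume_eq_smul_haarAddCircle, smul_smul,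
        ENNReal.inv_mul_cancel (ne_of_gt (ENNReal.ofReal_pos.mpr h2π)) ENNReal.ofReal_ne_top, one_smul]
    rw [h1]
    exact hFsq.smul_measure (ENNReal.inv_ne_top.mpr (ne_of_gt (ENNReal.ofReal_pos.mpr h2π)))
  have hF2 : MemLp F 2 (AddCircle.haarAddCircle (T := 2*π)) :=
    (memLp_two_iff_integrable_sq_norm hFsm.aestronglyMeasurable).mpr hFsqh
  set fLp := hF2.toLp F with hfLp
  -- Fourier coefficients agree with c
  have hcoef : ∀ n : ℤ, fourierCoeff (⇑fLp) n = c n := by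
    intro n
    have e1 : fourierCoeff (⇑fLp) n = fourierCoeff F n := by
      unfold fourierCoeff
      refine integral_congr_ae ?_
      filter_upwards [hF2.coeFn_toLp] with t ht
      rw [ht]
    have e2 : fourierCoeff F n =
        fourierCoeffOn (lt_add_of_pos_right 0 hT.out) g' n :=
      fourierCoeff_liftIoc_eq g' n
    rw [e1, e2, fourierCoeffOn_eq_integral]
    simp only [zero_add, sub_zero]
    simp only [smul_eq_mul]
    have e3 : ∫ x in (0:ℝ)..2*π, fourier (T := (0:ℝ)+2*π-0) (-n) (x : AddCircle ((0:ℝ)+2*π-0)) * g' x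
        = ∫ θ in (0:ℝ)..(2*π), g θ * Complex.exp (-Complex.I * (n:ℂ) * (θ:ℂ)) := by
      rw [intervalIntegral.integral_of_le h2π.le, intervalIntegral.integral_of_le h2π.le]
      refine integral_congr_ae ?_
      filter_upwards [hae] with x hx
      rw [← hx, mul_comm]
      congr 1
      rw [fourier_coe_apply]
      congr 1
      have hπ : (π:ℂ) ≠ 0 := Complex.ofReal_ne_zero.mpr pi_ne_zero
      push_cast
      field_simp
      ring
    have e4 : ((1/(2*π):ℝ):ℂ) = 1/(2*(π:ℂ)) := by push_cast; ring
    rw [hc n, Complex.real_smul, e4, one_div, inv_mul_eq_div]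
    exact congrArg (fun z => z / (2*(π:ℂ))) e3
  have hPar := tsum_sq_fourierCoeff fLp
  have hsummable : Summable (fun n : ℤ => ‖c n‖^2) := by
    refine ((fourierBasis (T := 2*π)).orthonormal.inner_products_summable (x := fLp)).congr
      fun i => ?_
    rw [← HilbertBasis.repr_apply_apply, fourierBasis_repr, hcoef i]
  have hsum_eq : ∑' n : ℤ, ‖c n‖^2
      = (1/(2*π)) * ∫ θ in Set.Ioc (0:ℝ) (2*π), ‖g θ‖^2 := by
    have h2 : ∑' i : ℤ, ‖fourierCoeff (⇑fLp) i‖^2 = ∑' n : ℤ, ‖c n‖^2 :=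
      tsum_congr fun n => by rw [hcoef n]
    rw [← h2, hPar]
    have h3 : ∫ t, ‖fLp t‖^2 ∂(AddCircle.haarAddCircle (T := 2*π))
        = ∫ t, ‖F t‖^2 ∂(AddCircle.haarAddCircle (T := 2*π)) := by
      refine integral_congr_ae ?_
      filter_upwards [hF2.coeFn_toLp] with t ht
      rw [ht]
    have h4 : ∫ t, ‖F t‖^2 ∂(volume : Measure (AddCircle (2*π)))
        = (2*π) * ∫ t, ‖F t‖^2 ∂(AddCircle.haarAddCircle (T := 2*π)) := by
      rw [AddCircle.volume_eq_smul_haarAddCircle, integral_smul_measure,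
        ENNReal.toReal_ofReal h2π.le, smul_eq_mul]
    have h5 : ∫ t, ‖F t‖^2 ∂(volume : Measure (AddCircle (2*π)))
        = ∫ θ in Set.Ioc (0:ℝ) (2*π), ‖g θ‖^2 := by
      rw [← AddCircle.integral_preimage (2*π) 0 (fun t => ‖F t‖^2)]
      rw [show volume.restrict (Set.Ioc (0:ℝ) (0+2*π)) = μ from hμ']
      rw [hμ]
      refine integral_congr_ae ?_
      have hh : ∀ᵐ x ∂μ, x ∈ Set.Ioc (0:ℝ) (2*π) := ae_restrict_mem measurableSet_Ioc
      rw [← hμ]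
      filter_upwards [hh, hae] with x hx hx2
      rw [hFg' x (by simpa using hx), ← hx2]
    rw [h3]
    rw [← h5, h4]
    field_simp
  refine ⟨hsummable, ?_⟩
  set J2 := ∫ θ in Set.Ioc (0:ℝ) (2*π), ‖g θ‖^2 with hJ2
  set J4 := ∫ θ in Set.Ioc (0:ℝ) (2*π), ‖g θ‖^4 with hJ4
  have hJ2nn : 0 ≤ J2 := setIntegral_nonneg measurableSet_Ioc (fun θ _ => by positivity)
  have hJ4nn : 0 ≤ J4 := setIntegral_nonneg measurableSet_Ioc (fun θ _ => by positivity)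
  have hCS : J2^2 ≤ (2*π) * J4 := by
    have h2eq : ENNReal.ofReal (2:ℝ) = 2 := by norm_num
    have hf : MemLp (fun θ => ‖g θ‖^2) (ENNReal.ofReal 2) μ := by
      rw [h2eq]
      refine (memLp_two_iff_integrable_sq
        ((continuous_pow 2).comp_aestronglyMeasurable m.norm)).mpr ?_
      refine hg4.congr (Filter.Eventually.of_forall fun θ => ?_)
      ring
    have hone : MemLp (fun _ : ℝ => (1:ℝ)) (ENNReal.ofReal 2) μ := by
      rw [h2eq]; exact memLp_const 1
    have hpq : (2:ℝ).HolderConjugate 2 := Real.HolderConjugate.two_two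
    have h := integral_mul_le_Lp_mul_Lq_of_nonneg hpq
      (ae_of_all _ fun θ => by positivity) (ae_of_all _ fun _ => zero_le_one) hf hone
    simp only [mul_one] at h
    have hconst : ∫ _ : ℝ, (1:ℝ)^(2:ℝ) ∂μ = 2*π := by
      simp only [Real.one_rpow]
      rw [hμ, integral_const, smul_eq_mul, measureReal_def, Measure.restrict_apply_univ, Real.volume_Ioc]
      rw [ENNReal.toReal_ofReal (by linarith)]
      ring
    have hquart : ∫ θ, (‖g θ‖^2)^(2:ℝ) ∂μ = J4 := by
      rw [hJ4, hμ]
      refine integral_congr_ae (Filter.Eventually.of_forall fun θ => ?_)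
      show ((‖g θ‖^2)^(2:ℝ)) = ‖g θ‖^4
      rw [show ((2:ℝ)) = ((2:ℕ):ℝ) from by norm_num, Real.rpow_natCast]
      ring
    rw [hconst, hquart] at h
    have hJ2' : J2 ≤ Real.sqrt J4 * Real.sqrt (2*π) := by
      rwa [Real.sqrt_eq_rpow, Real.sqrt_eq_rpow]
    have h1 := Real.sq_sqrt hJ4nn
    have h2 := Real.sq_sqrt (by linarith : (0:ℝ) ≤ 2*π)
    have h3 := Real.sqrt_nonneg J4
    have h4 := Real.sqrt_nonneg (2*π)
    nlinarith [mul_self_le_mul_self hJ2nn hJ2']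
  rw [hsum_eq, intervalIntegral.integral_of_le h2π.le, ← hμ, ← hJ4]
  calc ((1/(2*π)) * J2)^2 = (1/(2*π))^2 * J2^2 := by ring
    _ ≤ (1/(2*π))^2 * ((2*π) * J4) := by
        exact mul_le_mul_of_nonneg_left hCS (by positivity)
    _ = (1/(2*π)) * J4 := by field_simp


/-- For `Φ ∈ L⁴(ℝ²)` written in polar coordinates with angular Fourier coefficients
`φ_n(r) = (1/2π) ∫_0^{2π} Φ(r,θ) e^{-inθ} dθ`, one has
`∫_{ℝ²} |Φ|⁴ ≥ 2π Σ_{p,q∈ℤ} ∫_0^∞ |φ_p|²|φ_q|² r dr`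
(the left-hand side being expressed in polar coordinates). -/
theorem stmt2 (Φ : ℝ → ℝ → ℂ)
    (hΦint : ∀ r : ℝ, 0 < r →
      IntervalIntegrable (fun θ => Φ r θ) volume 0 (2 * π))
    (hΦ4 : ∀ r : ℝ, 0 < r →
      IntervalIntegrable (fun θ => ‖Φ r θ‖ ^ 4) volume 0 (2 * π))
    (hL4 : Integrable (fun r : ℝ => (∫ θ in (0:ℝ)..(2 * π), ‖Φ r θ‖ ^ 4) * r)
      (volume.restrict (Set.Ioi (0:ℝ))))
    (φ : ℤ → ℝ → ℂ)
    (hφ : ∀ (n : ℤ) (r : ℝ), 0 < r →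
      φ n r = (∫ θ in (0:ℝ)..(2 * π),
        Φ r θ * Complex.exp (-Complex.I * (n : ℂ) * (θ : ℂ))) / (2 * (π : ℂ)))
    (hsum : Summable fun pq : ℤ × ℤ =>
      ∫ r in Set.Ioi (0:ℝ), ‖φ pq.1 r‖ ^ 2 * ‖φ pq.2 r‖ ^ 2 * r) :
    2 * π * ∑' pq : ℤ × ℤ,
        (∫ r in Set.Ioi (0:ℝ), ‖φ pq.1 r‖ ^ 2 * ‖φ pq.2 r‖ ^ 2 * r)
      ≤ ∫ r in Set.Ioi (0:ℝ), (∫ θ in (0:ℝ)..(2 * π), ‖Φ r θ‖ ^ 4) * r := by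
  have h2π : (0:ℝ) < 2*π := by positivity
  have hGnn : ∀ pq : ℤ × ℤ, ∀ᵐ r ∂(volume.restrict (Set.Ioi (0:ℝ))),
      0 ≤ ‖φ pq.1 r‖ ^ 2 * ‖φ pq.2 r‖ ^ 2 * r := by
    intro pq
    filter_upwards [ae_restrict_mem measurableSet_Ioi] with r hr
    have hr' : 0 < r := hr
    positivity
  have hAnn : ∀ pq : ℤ × ℤ,
      0 ≤ ∫ r in Set.Ioi (0:ℝ), ‖φ pq.1 r‖ ^ 2 * ‖φ pq.2 r‖ ^ 2 * r :=
    fun pq => integral_nonneg_of_ae (hGnn pq)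
  have hRnn : ∀ᵐ r ∂(volume.restrict (Set.Ioi (0:ℝ))),
      0 ≤ (∫ θ in (0:ℝ)..(2 * π), ‖Φ r θ‖ ^ 4) * r := by
    filter_upwards [ae_restrict_mem measurableSet_Ioi] with r hr
    have hr' : 0 < r := hr
    have h1 : 0 ≤ ∫ θ in (0:ℝ)..(2*π), ‖Φ r θ‖^4 :=
      intervalIntegral.integral_nonneg h2π.le (fun θ _ => by positivity)
    exact mul_nonneg h1 hr'.le
  have hRHSnn : 0 ≤ ∫ r in Set.Ioi (0:ℝ), (∫ θ in (0:ℝ)..(2 * π), ‖Φ r θ‖ ^ 4) * r :=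
    integral_nonneg_of_ae hRnn
  -- key per-r facts
  have hkey : ∀ r : ℝ, 0 < r → Summable (fun n : ℤ => ‖φ n r‖^2) ∧
      (∑' n : ℤ, ‖φ n r‖^2)^2 ≤ (1/(2*π)) * ∫ θ in (0:ℝ)..(2*π), ‖Φ r θ‖^4 := by
    intro r hr
    have hg2 : IntegrableOn (fun θ => Φ r θ) (Set.Ioc 0 (2*π)) := by
      have := hΦint r hr
      rwa [intervalIntegrable_iff_integrableOn_Ioc_of_le h2π.le] at this
    have hg4 : IntegrableOn (fun θ => ‖Φ r θ‖^4) (Set.Ioc 0 (2*π)) := by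
      have := hΦ4 r hr
      rwa [intervalIntegrable_iff_integrableOn_Ioc_of_le h2π.le] at this
    exact my_key (fun θ => Φ r θ) hg2 hg4 (fun n => φ n r) (fun n => hφ n r hr)
  -- main ENNReal chain
  have main : ENNReal.ofReal (2 * π * ∑' pq : ℤ × ℤ,
        (∫ r in Set.Ioi (0:ℝ), ‖φ pq.1 r‖ ^ 2 * ‖φ pq.2 r‖ ^ 2 * r))
      ≤ ENNReal.ofReal (∫ r in Set.Ioi (0:ℝ), (∫ θ in (0:ℝ)..(2 * π), ‖Φ r θ‖ ^ 4) * r) := by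
    calc ENNReal.ofReal (2 * π * ∑' pq : ℤ × ℤ,
            (∫ r in Set.Ioi (0:ℝ), ‖φ pq.1 r‖ ^ 2 * ‖φ pq.2 r‖ ^ 2 * r))
        = ENNReal.ofReal (2*π) * ENNReal.ofReal (∑' pq : ℤ × ℤ,
            (∫ r in Set.Ioi (0:ℝ), ‖φ pq.1 r‖ ^ 2 * ‖φ pq.2 r‖ ^ 2 * r)) :=
          ENNReal.ofReal_mul (by positivity)
      _ = ENNReal.ofReal (2*π) * ∑' pq : ℤ × ℤ, ENNReal.ofReal
            (∫ r in Set.Ioi (0:ℝ), ‖φ pq.1 r‖ ^ 2 * ‖φ pq.2 r‖ ^ 2 * r) := by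
          rw [ENNReal.ofReal_tsum_of_nonneg hAnn hsum]
      _ ≤ ENNReal.ofReal (2*π) * ∑' pq : ℤ × ℤ,
            ∫⁻ r in Set.Ioi (0:ℝ), ENNReal.ofReal (‖φ pq.1 r‖ ^ 2 * ‖φ pq.2 r‖ ^ 2 * r) := by
          refine mul_le_mul_right (ENNReal.tsum_le_tsum fun pq => ?_) _
          by_cases hint : Integrable (fun r => ‖φ pq.1 r‖ ^ 2 * ‖φ pq.2 r‖ ^ 2 * r)
            (volume.restrict (Set.Ioi (0:ℝ)))
          · rw [MeasureTheory.ofReal_integral_eq_lintegral_ofReal hint (hGnn pq)]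
          · rw [integral_undef hint]
            simp
      _ ≤ ENNReal.ofReal (2*π) * ∫⁻ r in Set.Ioi (0:ℝ),
            ∑' pq : ℤ × ℤ, ENNReal.ofReal (‖φ pq.1 r‖ ^ 2 * ‖φ pq.2 r‖ ^ 2 * r) :=
          mul_le_mul_right (my_tsum_lintegral_le _ _) _
      _ ≤ ENNReal.ofReal (2*π) * ∫⁻ r in Set.Ioi (0:ℝ),
            ENNReal.ofReal ((1/(2*π)) * ((∫ θ in (0:ℝ)..(2 * π), ‖Φ r θ‖ ^ 4) * r)) := by
          refine mul_le_mul_right (lintegral_mono_ae ?_) _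
          filter_upwards [ae_restrict_mem measurableSet_Ioi] with r hr
          have hr' : (0:ℝ) < r := hr
          obtain ⟨hsummable, hbound⟩ := hkey r hr'
          have hterm : ∀ pq : ℤ × ℤ, ENNReal.ofReal (‖φ pq.1 r‖ ^ 2 * ‖φ pq.2 r‖ ^ 2 * r)
              = ENNReal.ofReal (‖φ pq.1 r‖ ^ 2) * (ENNReal.ofReal (‖φ pq.2 r‖ ^ 2)
                  * ENNReal.ofReal r) := by
            intro pq
            rw [ENNReal.ofReal_mul (by positivity), ENNReal.ofReal_mul (by positivity), mul_assoc]
          have hts : 0 ≤ ∑' n : ℤ, ‖φ n r‖^2 := tsum_nonneg (fun n => by positivity)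
          have hS : ∑' n : ℤ, ENNReal.ofReal (‖φ n r‖^2)
              = ENNReal.ofReal (∑' n : ℤ, ‖φ n r‖^2) :=
            (ENNReal.ofReal_tsum_of_nonneg (fun n => by positivity) hsummable).symm
          calc ∑' pq : ℤ × ℤ, ENNReal.ofReal (‖φ pq.1 r‖ ^ 2 * ‖φ pq.2 r‖ ^ 2 * r)
              = ∑' pq : ℤ × ℤ, ENNReal.ofReal (‖φ pq.1 r‖ ^ 2) *
                  (ENNReal.ofReal (‖φ pq.2 r‖ ^ 2) * ENNReal.ofReal r) :=
                tsum_congr hterm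
            _ = ∑' p : ℤ, ∑' q : ℤ, ENNReal.ofReal (‖φ p r‖ ^ 2) *
                  (ENNReal.ofReal (‖φ q r‖ ^ 2) * ENNReal.ofReal r) :=
                ENNReal.tsum_prod (f := fun p q => ENNReal.ofReal (‖φ p r‖ ^ 2) *
                  (ENNReal.ofReal (‖φ q r‖ ^ 2) * ENNReal.ofReal r))
            _ = ∑' p : ℤ, ENNReal.ofReal (‖φ p r‖ ^ 2) *
                  ((∑' q : ℤ, ENNReal.ofReal (‖φ q r‖ ^ 2)) * ENNReal.ofReal r) := by
                refine tsum_congr fun p => ?_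
                rw [ENNReal.tsum_mul_left, ENNReal.tsum_mul_right]
            _ = (∑' p : ℤ, ENNReal.ofReal (‖φ p r‖ ^ 2)) *
                  ((∑' q : ℤ, ENNReal.ofReal (‖φ q r‖ ^ 2)) * ENNReal.ofReal r) :=
                ENNReal.tsum_mul_right
            _ = ENNReal.ofReal ((∑' n : ℤ, ‖φ n r‖^2) * ((∑' n : ℤ, ‖φ n r‖^2) * r)) := by
                rw [hS, ← ENNReal.ofReal_mul hts, ← ENNReal.ofReal_mul hts]
            _ ≤ ENNReal.ofReal ((1/(2*π)) * ((∫ θ in (0:ℝ)..(2 * π), ‖Φ r θ‖ ^ 4) * r)) := by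
                refine ENNReal.ofReal_le_ofReal ?_
                have h1 : (∑' n : ℤ, ‖φ n r‖^2) * ((∑' n : ℤ, ‖φ n r‖^2) * r)
                    = (∑' n : ℤ, ‖φ n r‖^2)^2 * r := by ring
                have h2 : ((1/(2*π)) * ∫ θ in (0:ℝ)..(2*π), ‖Φ r θ‖^4) * r
                    = (1/(2*π)) * ((∫ θ in (0:ℝ)..(2 * π), ‖Φ r θ‖ ^ 4) * r) := by ring
                rw [h1, ← h2]
                exact mul_le_mul_of_nonneg_right hbound hr'.le
      _ = ENNReal.ofReal (2*π) * ENNReal.ofReal (∫ r in Set.Ioi (0:ℝ),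
            (1/(2*π)) * ((∫ θ in (0:ℝ)..(2 * π), ‖Φ r θ‖ ^ 4) * r)) := by
          rw [MeasureTheory.ofReal_integral_eq_lintegral_ofReal (hL4.const_mul _) ?_]
          filter_upwards [hRnn] with r h
          exact mul_nonneg (by positivity) h
      _ = ENNReal.ofReal (∫ r in Set.Ioi (0:ℝ), (∫ θ in (0:ℝ)..(2 * π), ‖Φ r θ‖ ^ 4) * r) := by
          rw [← ENNReal.ofReal_mul h2π.le]
          congr 1
          rw [integral_const_mul]
          field_simp
  exact (ENNReal.ofReal_le_ofReal_iff hRHSnn).mp main
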